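/- Let n = p+q with p ≥ q ≥ 1, let X be an n×n Hermitian matrix with eigenvalues λ_1 ≥ ... ≥ λ_n and let s_1 ≥ ... ≥ s_q ≥ 0 be the singular values of its upper-right p×q block. Then Σ_{k=1}^{q} 2 s_k ≤ Σ_{i=1}^{q} λ_i − Σ_{j=n−q+1}^{n} λ_j. -/

import Mathlib

open Matrix
open scoped ComplexOrder

noncomputable section

/-- `lam` is the weakly decreasing list of eigenvalues of the Hermitian matrix `X`. -/
def IsEigList {n : ℕ} {X : Matrix (Fin n) (Fin n) ℂ} (hX : X.IsHermitian)
    (lam : Fin n → ℝ) : Prop :=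
  Antitone lam ∧ ∃ e : Fin n ≃ Fin n, ∀ i, lam i = hX.eigenvalues (e i)

/-- `s` is the weakly decreasing list of singular values of `Y`. -/
def IsSingList {p q : ℕ} (Y : Matrix (Fin p) (Fin q) ℂ) (s : Fin q → ℝ) : Prop :=
  Antitone s ∧ (∀ k, 0 ≤ s k) ∧
    ∃ e : Fin q ≃ Fin q, ∀ k,
      s k ^ 2 = (Matrix.posSemidef_conjTranspose_mul_self Y).1.eigenvalues (e k)

/-- The upper-right `p × q` block of an `(p+q) × (p+q)` matrix. -/
def offBlock {p q : ℕ} (X : Matrix (Fin (p + q)) (Fin (p + q)) ℂ) :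
    Matrix (Fin p) (Fin q) ℂ :=
  fun i j => X (Fin.castAdd q i) (Fin.natAdd p j)

/-- The matrix `[[0, Y],[Yᴴ, 0]]`. -/
def blockZ {p q : ℕ} (Y : Matrix (Fin p) (Fin q) ℂ) :
    Matrix (Fin (p + q)) (Fin (p + q)) ℂ :=
  Matrix.reindex finSumFinEquiv finSumFinEquiv (Matrix.fromBlocks 0 Y Yᴴ 0)

/-- `ν(s) = (s₁,…,s_q,0,…,0,−s_q,…,−s₁) ∈ ℝⁿ`, `n = p + q`. -/
def nuList (p q : ℕ) (s : Fin q → ℝ) : Fin (p + q) → ℝ :=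
  fun k =>
    if h : (k : ℕ) < q then s ⟨k, h⟩
    else if h' : p ≤ (k : ℕ) then
      -s ⟨p + q - 1 - (k : ℕ), by have := k.isLt; omega⟩
    else 0

/-- The matrix `I_{p,q} = Diag(I_p, −I_q)`. -/
def Ipq (p q : ℕ) : Matrix (Fin (p + q)) (Fin (p + q)) ℂ :=
  Matrix.diagonal fun k => if (k : ℕ) < p then 1 else -1

/-- The `U(n)`-conjugation orbit of a matrix. -/
def uOrbit {n : ℕ} (X : Matrix (Fin n) (Fin n) ℂ) : Set (Matrix (Fin n) (Fin n) ℂ) :=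
  { Y | ∃ g ∈ Matrix.unitaryGroup (Fin n) ℂ, Y = g * X * star g }

/-- Membership in the Horn cone `Horn(n)`. -/
def HornMem {n : ℕ} (x y z : Fin n → ℝ) : Prop :=
  ∃ (A B : Matrix (Fin n) (Fin n) ℂ) (hA : A.IsHermitian) (hB : B.IsHermitian)
    (hC : (A + B).IsHermitian), IsEigList hA x ∧ IsEigList hB y ∧ IsEigList hC z


open Finset
open scoped InnerProductSpace


lemma sum_ite_lt_q {n q : ℕ} (hqn : q ≤ n) (hq : 0 < q) (f : Fin n → ℝ) :
    (∑ i : Fin n, if (i : ℕ) < q then f i else 0) = ∑ k : Fin q, f (Fin.castLE hqn k) := by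
  rw [← Finset.sum_filter]
  refine Finset.sum_nbij' (fun a => (⟨(a : ℕ) % q, Nat.mod_lt _ hq⟩ : Fin q))
    (fun k => Fin.castLE hqn k) ?_ ?_ ?_ ?_ ?_
  · intro a _; exact Finset.mem_univ _
  · intro k _; exact Finset.mem_filter.2 ⟨Finset.mem_univ _, k.isLt⟩
  · intro a ha; simp only [Finset.mem_filter] at ha
    exact Fin.ext (by simp [Fin.castLE, Nat.mod_eq_of_lt ha.2])
  · intro k _; exact Fin.ext (by simp [Fin.castLE, Nat.mod_eq_of_lt k.isLt])
  · intro a ha; simp only [Finset.mem_filter] at ha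
    congr 1; exact (Fin.ext (by simp [Fin.castLE, Nat.mod_eq_of_lt ha.2]) : Fin.castLE hqn ⟨(a:ℕ) % q, Nat.mod_lt _ hq⟩ = a).symm

lemma abel_bound {n q : ℕ} (hqn : q ≤ n) (hq : 0 < q) (lam : Fin n → ℝ) (hlam : Antitone lam)
    (c : Fin n → ℝ) (hc0 : ∀ i, 0 ≤ c i) (hc1 : ∀ i, c i ≤ 1)
    (hcs : ∑ i, c i = q) :
    ∑ i, lam i * c i ≤ ∑ k : Fin q, lam (Fin.castLE hqn k) := by
  set t := lam (Fin.castLE hqn ⟨q - 1, by omega⟩) with ht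
  have key : ∀ i : Fin n, lam i * c i ≤ (if (i : ℕ) < q then lam i - t else 0) + t * c i := by
    intro i
    by_cases h : (i : ℕ) < q
    · simp only [h, if_pos]
      have h1 : t ≤ lam i := hlam (by simp [Fin.le_def]; omega)
      nlinarith [hc1 i, hc0 i]
    · simp only [h, if_neg, not_false_iff]
      have h1 : lam i ≤ t := hlam (by simp [Fin.le_def]; omega)
      nlinarith [hc0 i]
  calc ∑ i, lam i * c i
      ≤ ∑ i : Fin n, ((if (i : ℕ) < q then lam i - t else 0) + t * c i) :=
        Finset.sum_le_sum fun i _ => key i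
    _ = (∑ i : Fin n, if (i : ℕ) < q then lam i - t else 0) + t * ∑ i, c i := by
        rw [Finset.sum_add_distrib, Finset.mul_sum]
    _ = (∑ k : Fin q, (lam (Fin.castLE hqn k) - t)) + t * q := by
        rw [hcs, sum_ite_lt_q hqn hq]
    _ = ∑ k : Fin q, lam (Fin.castLE hqn k) := by
        rw [Finset.sum_sub_distrib]
        simp [mul_comm]


lemma star_mulVec_dot {m' n' : Type*} [Fintype m'] [Fintype n']
    (M : Matrix m' n' ℂ) (x y : n' → ℂ) :
    star (M *ᵥ x) ⬝ᵥ (M *ᵥ y) = star x ⬝ᵥ ((Mᴴ * M) *ᵥ y) := by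
  rw [star_mulVec, dotProduct_mulVec, vecMul_vecMul, ← dotProduct_mulVec]

lemma quad_eq_sum {n : ℕ} (U : Matrix (Fin n) (Fin n) ℂ)
    (μ : Fin n → ℝ) (w : Fin n → ℂ) :
    (star w ⬝ᵥ ((U * Matrix.diagonal (fun i => (μ i : ℂ)) * Uᴴ) *ᵥ w)).re
      = ∑ i, μ i * ‖(star U *ᵥ w) i‖ ^ 2 := by
  set m := star U *ᵥ w with hm
  have hsw : star w ᵥ* U = star m := by
    rw [hm, show (star U : Matrix (Fin n) (Fin n) ℂ) = Uᴴ from rfl, star_mulVec,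
      conjTranspose_conjTranspose]
  have h1 : (U * Matrix.diagonal (fun i => (μ i : ℂ)) * Uᴴ) *ᵥ w
      = U *ᵥ (Matrix.diagonal (fun i => (μ i : ℂ)) *ᵥ m) := by
    rw [← mulVec_mulVec, ← mulVec_mulVec]; rfl
  rw [h1, dotProduct_mulVec, hsw]
  simp only [dotProduct, mulVec_diagonal, Pi.star_apply, RCLike.star_def, Complex.re_sum]
  refine Finset.sum_congr rfl fun i _ => ?_
  have : (starRingEnd ℂ) (m i) * ((μ i : ℂ) * m i)
      = (μ i : ℂ) * ((starRingEnd ℂ) (m i) * m i) := by ring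
  rw [this, Complex.conj_mul']
  rw [show ((μ i : ℂ) * ((‖m i‖ : ℂ) ^ 2)) = (((μ i * ‖m i‖ ^ 2 : ℝ)) : ℂ) by push_cast; ring]
  exact Complex.ofReal_re _

lemma bessel_col {n q : ℕ} (m : Fin q → (Fin n → ℂ))
    (hm : ∀ j k, star (m j) ⬝ᵥ m k = if j = k then 1 else 0) (i : Fin n) :
    ∑ k, ‖m k i‖ ^ 2 ≤ 1 := by
  set mv : Fin q → EuclideanSpace ℂ (Fin n) := fun k => (WithLp.equiv 2 _).symm (m k) with hmv
  have horth : Orthonormal ℂ mv := by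
    rw [orthonormal_iff_ite]
    intro j k
    rw [hmv]
    simpa [EuclideanSpace.inner_toLp_toLp, dotProduct_comm (m k)] using hm j k
  have hb := horth.sum_inner_products_le (EuclideanSpace.single i 1) (s := Finset.univ)
  have h1 : ∀ k, ⟪mv k, EuclideanSpace.single i (1:ℂ)⟫_ℂ = star (m k) ⬝ᵥ Pi.single i 1 := by
    intro k; exact dotProduct_comm _ _
  calc ∑ k, ‖m k i‖ ^ 2 = ∑ k, ‖⟪mv k, EuclideanSpace.single i (1:ℂ)⟫_ℂ‖ ^ 2 := by
        refine Finset.sum_congr rfl fun k _ => ?_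
        rw [h1, dotProduct_single, mul_one, Pi.star_apply, RCLike.star_def, RCLike.norm_conj]
    _ ≤ ‖EuclideanSpace.single i (1:ℂ)‖ ^ 2 := hb
    _ = 1 := by rw [EuclideanSpace.norm_single]; norm_num


lemma append_dot {p q : ℕ} (a a' : Fin p → ℂ) (b b' : Fin q → ℂ) :
    star (Fin.append a b) ⬝ᵥ Fin.append a' b' = star a ⬝ᵥ a' + star b ⬝ᵥ b' := by
  simp [dotProduct, Fin.sum_univ_add]

lemma dot_conjTranspose_mulVec {m' n' : Type*} [Fintype m'] [Fintype n']
    (M : Matrix m' n' ℂ) (x : m' → ℂ) (y : n' → ℂ) :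
    star y ⬝ᵥ (Mᴴ *ᵥ x) = starRingEnd ℂ (star x ⬝ᵥ (M *ᵥ y)) := by
  simp only [dotProduct, mulVec, map_sum, Pi.star_apply, RCLike.star_def, conjTranspose_apply,
    dotProduct, _root_.map_mul, Complex.conj_conj, Finset.mul_sum]
  rw [Finset.sum_comm]
  refine Finset.sum_congr rfl fun j _ => Finset.sum_congr rfl fun i _ => by ring

lemma mulVec_append {p q : ℕ} (X : Matrix (Fin (p + q)) (Fin (p + q)) ℂ)
    (a : Fin p → ℂ) (b : Fin q → ℂ) :
    X *ᵥ Fin.append a b =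
      Fin.append
        ((fun i j => X (Fin.castAdd q i) (Fin.castAdd q j)) *ᵥ a
          + (fun i j => X (Fin.castAdd q i) (Fin.natAdd p j)) *ᵥ b)
        ((fun i j => X (Fin.natAdd p i) (Fin.castAdd q j)) *ᵥ a
          + (fun i j => X (Fin.natAdd p i) (Fin.natAdd p j)) *ᵥ b) := by
  funext i
  refine Fin.addCases (fun i => ?_) (fun i => ?_) i
  · rw [Fin.append_left]
    simp [mulVec, dotProduct, Fin.sum_univ_add]
  · rw [Fin.append_right]
    simp [mulVec, dotProduct, Fin.sum_univ_add]

lemma quad_append {p q : ℕ} (X : Matrix (Fin (p + q)) (Fin (p + q)) ℂ)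
    (a a' : Fin p → ℂ) (b b' : Fin q → ℂ) :
    star (Fin.append a b) ⬝ᵥ (X *ᵥ Fin.append a' b') =
      star a ⬝ᵥ ((fun i j => X (Fin.castAdd q i) (Fin.castAdd q j)) *ᵥ a')
      + star a ⬝ᵥ ((fun i j => X (Fin.castAdd q i) (Fin.natAdd p j)) *ᵥ b')
      + star b ⬝ᵥ ((fun i j => X (Fin.natAdd p i) (Fin.castAdd q j)) *ᵥ a')
      + star b ⬝ᵥ ((fun i j => X (Fin.natAdd p i) (Fin.natAdd p j)) *ᵥ b') := by
  rw [mulVec_append, append_dot, dotProduct_add, dotProduct_add]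
  ring

lemma sum_quad_le {n q : ℕ} (hqn : q ≤ n) (hq : 0 < q)
    {X U : Matrix (Fin n) (Fin n) ℂ}
    (hU : U ∈ Matrix.unitaryGroup (Fin n) ℂ)
    {μ : Fin n → ℝ} (hXU : X = U * Matrix.diagonal (fun i => (μ i : ℂ)) * Uᴴ)
    {lam : Fin n → ℝ} (hlam : Antitone lam) (e : Fin n ≃ Fin n) (he : ∀ i, lam i = μ (e i))
    (w : Fin q → (Fin n → ℂ)) (hw : ∀ j k, star (w j) ⬝ᵥ w k = if j = k then 1 else 0) :
    ∑ k, (star (w k) ⬝ᵥ (X *ᵥ w k)).re ≤ ∑ k : Fin q, lam (Fin.castLE hqn k) := by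
  set m : Fin q → Fin n → ℂ := fun k => star U *ᵥ w k with hmdef
  have hUU : Uᴴ * U = 1 := mem_unitaryGroup_iff'.mp hU
  have hUU' : U * Uᴴ = 1 := mem_unitaryGroup_iff.mp hU
  have hm : ∀ j k, star (m j) ⬝ᵥ m k = if j = k then 1 else 0 := by
    intro j k
    rw [hmdef]
    simp only
    rw [star_mulVec_dot]
    rw [show (star U : Matrix (Fin n) (Fin n) ℂ)ᴴ * star U = U * Uᴴ from by
      rw [show (star U : Matrix (Fin n) (Fin n) ℂ) = Uᴴ from rfl, conjTranspose_conjTranspose]]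
    rw [hUU', one_mulVec]
    exact hw j k
  set c : Fin n → ℝ := fun i => ∑ k, ‖m k i‖ ^ 2 with hcdef
  have hquad : ∀ k, (star (w k) ⬝ᵥ (X *ᵥ w k)).re = ∑ i, μ i * ‖m k i‖ ^ 2 := by
    intro k; rw [hXU]; exact quad_eq_sum U μ (w k)
  have hsum : ∑ k, (star (w k) ⬝ᵥ (X *ᵥ w k)).re = ∑ i, μ i * c i := by
    simp only [hquad, hcdef]
    rw [Finset.sum_comm]
    simp [Finset.mul_sum]
  rw [hsum]
  have hc0 : ∀ i, 0 ≤ c i := fun i => Finset.sum_nonneg fun k _ => by positivity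
  have hc1 : ∀ i, c i ≤ 1 := fun i => bessel_col m hm i
  have hnorm1 : ∀ k, ∑ i, ‖m k i‖ ^ 2 = 1 := by
    intro k
    have := hm k k
    simp only [if_pos rfl] at this
    have h2 := congrArg Complex.re this
    simp only [dotProduct, Complex.re_sum, Pi.star_apply, RCLike.star_def, if_true,
      Complex.one_re] at h2
    rw [← h2]
    refine Finset.sum_congr rfl fun i _ => ?_
    rw [Complex.conj_mul']
    simp [← Complex.ofReal_pow]
  have hcs : ∑ i, c i = q := by
    rw [hcdef]
    simp only
    rw [Finset.sum_comm]
    rw [Finset.sum_congr rfl fun k (_ : k ∈ Finset.univ) => hnorm1 k]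
    simp
  have key : ∑ i, μ i * c i = ∑ i, lam i * (c ∘ e) i := by
    rw [← Equiv.sum_comp e (fun i => μ i * c i)]
    exact Finset.sum_congr rfl fun i _ => by rw [he i]; rfl
  rw [key]
  exact abel_bound hqn hq lam hlam (c ∘ e) (fun i => hc0 _) (fun i => hc1 _)
    (by rw [← hcs]; exact Equiv.sum_comp e c)

/-- `Σ_{k=1}^{q} 2 s_k ≤ Σ_{i=1}^{q} λ_i − Σ_{j=n−q+1}^{n} λ_j`. -/
theorem ky_fan_inequality (p q : ℕ) (hq : 1 ≤ q) (hpq : q ≤ p)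
    (X : Matrix (Fin (p + q)) (Fin (p + q)) ℂ) (hX : X.IsHermitian)
    (lam : Fin (p + q) → ℝ) (hlam : IsEigList hX lam)
    (s : Fin q → ℝ) (hs : IsSingList (offBlock X) s) :
    ∑ k : Fin q, 2 * s k ≤
      ∑ k : Fin q, lam ⟨(k : ℕ), by have := k.isLt; omega⟩ -
        ∑ k : Fin q, lam ⟨p + (k : ℕ), by have := k.isLt; omega⟩ := by
  obtain ⟨hlam_anti, e, he⟩ := hlam
  obtain ⟨hs_anti, hs0, f, hsf⟩ := hs
  set Y := offBlock X with hYdef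
  have hH := Matrix.posSemidef_conjTranspose_mul_self Y
  set v : Fin q → (Fin q → ℂ) := fun k => ⇑(hH.1.eigenvectorBasis (f k)) with hvdef
  have hqn : q ≤ p + q := by omega
  have hq' : 0 < q := hq
  -- orthonormality of v
  have hvorth : ∀ j k, star (v j) ⬝ᵥ v k = if j = k then 1 else 0 := by
    have horth := (hH.1.eigenvectorBasis).orthonormal
    rw [orthonormal_iff_ite] at horth
    intro j k
    have h := horth (f j) (f k)
    have : ⟪hH.1.eigenvectorBasis (f j), hH.1.eigenvectorBasis (f k)⟫_ℂ
        = star (v j) ⬝ᵥ v k := dotProduct_comm _ _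
    rw [this] at h
    rw [h]
    simp [EmbeddingLike.apply_eq_iff_eq]
  -- eigen equation
  have hvec : ∀ k, (Yᴴ * Y) *ᵥ v k = ((s k : ℂ) ^ 2) • v k := by
    intro k
    have h := hH.1.mulVec_eigenvectorBasis (f k)
    rw [← hsf k] at h
    rw [hvdef]
    simp only
    rw [h]
    funext i
    simp [Complex.real_smul]
  -- left singular vectors
  set u : Fin q → (Fin p → ℂ) := fun k =>
    if s k = 0 then 0 else ((s k : ℂ))⁻¹ • (Y *ᵥ v k) with hudef
  set α : Fin q → ℝ := fun k => if s k = 0 then 1 else (Real.sqrt 2)⁻¹ with hadef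
  have hYvv : ∀ j k, star (Y *ᵥ v j) ⬝ᵥ (Y *ᵥ v k)
      = ((s k : ℂ) ^ 2) * (if j = k then 1 else 0) := by
    intro j k
    rw [star_mulVec_dot, hvec k]
    rw [dotProduct_smul, hvorth j k]
    simp [smul_eq_mul]
  have huu : ∀ j k, star (u j) ⬝ᵥ u k = if j = k ∧ s k ≠ 0 then 1 else 0 := by
    intro j k
    by_cases hj : s j = 0
    · have huj : u j = 0 := by rw [hudef]; simp [hj]
      rw [huj, if_neg (by rintro ⟨rfl, hk⟩; exact hk hj)]
      simp
    · by_cases hk : s k = 0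
      · have huk : u k = 0 := by rw [hudef]; simp [hk]
        rw [huk, if_neg (by rintro ⟨rfl, hk'⟩; exact hk' hk)]
        simp
      · have huj : u j = ((s j : ℂ))⁻¹ • (Y *ᵥ v j) := by rw [hudef]; simp [hj]
        have huk : u k = ((s k : ℂ))⁻¹ • (Y *ᵥ v k) := by rw [hudef]; simp [hk]
        rw [huj, huk]
        rw [star_smul, smul_dotProduct, dotProduct_smul, hYvv j k]
        rcases eq_or_ne j k with rfl | hjk
        · rw [if_pos rfl, if_pos ⟨rfl, hk⟩]
          simp only [star_inv₀, RCLike.star_def, Complex.conj_ofReal, smul_eq_mul, mul_one]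
          have : (s j : ℂ) ≠ 0 := by exact_mod_cast Complex.ofReal_ne_zero.mpr hj
          field_simp
        · rw [if_neg hjk, if_neg (by rintro ⟨rfl, _⟩; exact hjk rfl)]
          simp
  -- the two orthonormal families
  set W : ℂ → Fin q → (Fin (p + q) → ℂ) := fun ε k =>
    Fin.append ((α k : ℂ) • u k) ((ε * (α k : ℂ)) • v k) with hWdef
  have halpha_sq : ∀ k, ((α k : ℂ))^2 * (star (u k) ⬝ᵥ u k + 1) = 1 := by
    intro k
    rw [huu k k]
    by_cases hk : s k = 0
    · have ha : α k = 1 := by rw [hadef]; simp [hk]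
      rw [if_neg (by rintro ⟨_, h⟩; exact h hk), ha]
      norm_num
    · have ha : α k = (Real.sqrt 2)⁻¹ := by rw [hadef]; simp [hk]
      rw [if_pos ⟨rfl, hk⟩, ha]
      have h2 : ((Real.sqrt 2 : ℝ) : ℂ) ^ 2 = 2 := by
        rw [← Complex.ofReal_pow, Real.sq_sqrt (by norm_num)]
        norm_num
      push_cast
      rw [inv_pow, h2]
      norm_num
  have horthW : ∀ (ε : ℂ), (starRingEnd ℂ ε) * ε = 1 →
      ∀ j k, star (W ε j) ⬝ᵥ W ε k = if j = k then 1 else 0 := by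
    intro ε hε j k
    rw [hWdef]
    simp only
    rw [append_dot, star_smul, star_smul, smul_dotProduct, smul_dotProduct,
      dotProduct_smul, dotProduct_smul, huu j k, hvorth j k]
    rcases eq_or_ne j k with rfl | hjk
    · rw [if_pos rfl]
      have := halpha_sq j
      rw [huu j j] at this
      simp only [smul_eq_mul, RCLike.star_def, _root_.map_mul, Complex.conj_ofReal,
        eq_self_iff_true, true_and] at this ⊢
      linear_combination this + ((α j : ℂ))^2 * hε
    · rw [if_neg hjk, if_neg (by rintro ⟨rfl, _⟩; exact hjk rfl)]
      simp
  -- the lower-left block is Yᴴ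
  have hbl : (fun i j => X (Fin.natAdd p i) (Fin.castAdd q j)) = Yᴴ := by
    funext i j
    rw [conjTranspose_apply, hYdef]
    rw [show offBlock X j i = X (Fin.castAdd q j) (Fin.natAdd p i) from rfl]
    exact (hX.apply _ _).symm
  have hYblock : (fun i j => X (Fin.castAdd q i) (Fin.natAdd p j)) = Y := rfl
  -- the key quadratic form difference
  have hF3 : ∀ k, (star (W 1 k) ⬝ᵥ (X *ᵥ W 1 k)).re
      - (star (W (-1) k) ⬝ᵥ (X *ᵥ W (-1) k)).re = 2 * s k := by
    intro k
    set a := (α k : ℂ) • u k with hadef2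
    set b := (α k : ℂ) • v k with hbdef2
    have hW1 : W 1 k = Fin.append a b := by rw [hWdef]; simp only [one_mul]; rfl
    have hWm : W (-1) k = Fin.append a (-b) := by
      rw [hWdef]; simp only [neg_one_mul, neg_smul]; rfl
    have hT2 : star a ⬝ᵥ (Y *ᵥ b) = ((s k / 2 : ℝ) : ℂ) := by
      rw [hadef2, hbdef2, star_smul, smul_dotProduct, mulVec_smul, dotProduct_smul]
      by_cases hk : s k = 0
      · have hu0 : u k = 0 := by rw [hudef]; simp [hk]
        rw [hu0, hk]
        simp
      · have hu : u k = ((s k : ℂ))⁻¹ • (Y *ᵥ v k) := by rw [hudef]; simp [hk]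
        have ha : α k = (Real.sqrt 2)⁻¹ := by rw [hadef]; simp [hk]
        rw [hu, star_smul, smul_dotProduct, hYvv k k, if_pos rfl, ha]
        simp only [smul_eq_mul, RCLike.star_def, Complex.conj_ofReal, star_inv₀, mul_one]
        have h2 : ((Real.sqrt 2 : ℝ) : ℂ) * ((Real.sqrt 2 : ℝ) : ℂ) = 2 := by
          rw [← Complex.ofReal_mul, Real.mul_self_sqrt (by norm_num)]
          norm_num
        have hsne : (s k : ℂ) ≠ 0 := Complex.ofReal_ne_zero.mpr hk
        push_cast
        field_simp
        have h2c : ((Real.sqrt 2 : ℝ) : ℂ) ^ 2 = 2 := by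
          rw [← Complex.ofReal_pow, Real.sq_sqrt (by norm_num : (0:ℝ) ≤ 2)]
          norm_num
        linear_combination (-1 : ℂ) * h2c
    have hT3 : star b ⬝ᵥ (Yᴴ *ᵥ a) = starRingEnd ℂ (star a ⬝ᵥ (Y *ᵥ b)) :=
      dot_conjTranspose_mulVec Y a b
    have hdiff : star (Fin.append a b) ⬝ᵥ (X *ᵥ Fin.append a b)
        - star (Fin.append a (-b)) ⬝ᵥ (X *ᵥ Fin.append a (-b))
        = 2 * (star a ⬝ᵥ (Y *ᵥ b) + star b ⬝ᵥ (Yᴴ *ᵥ a)) := by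
      rw [quad_append, quad_append, hYblock, hbl]
      simp only [star_neg, mulVec_neg, dotProduct_neg, neg_dotProduct, neg_neg]
      rw [show (fun i j => X (Fin.natAdd p i) (Fin.natAdd p j)) *ᵥ -b = -((fun i j => X (Fin.natAdd p i) (Fin.natAdd p j)) *ᵥ b) from mulVec_neg b _, dotProduct_neg]
      ring
    rw [hW1, hWm, ← Complex.sub_re, hdiff, hT3, hT2]
    rw [Complex.conj_ofReal, ← Complex.ofReal_add, ← Complex.ofReal_ofNat,
      ← Complex.ofReal_mul, Complex.ofReal_re]
    ring
  -- spectral decomposition of X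
  set U : Matrix (Fin (p + q)) (Fin (p + q)) ℂ :=
    (Matrix.IsHermitian.eigenvectorUnitary hX : Matrix (Fin (p + q)) (Fin (p + q)) ℂ) with hUdef
  have hU : U ∈ Matrix.unitaryGroup (Fin (p + q)) ℂ :=
    (Matrix.IsHermitian.eigenvectorUnitary hX).2
  have hXU : X = U * Matrix.diagonal (fun i => ((hX.eigenvalues i : ℝ) : ℂ)) * Uᴴ :=
    hX.spectral_theorem
  have hXU' : -X = U * Matrix.diagonal (fun i => ((-hX.eigenvalues i : ℝ) : ℂ)) * Uᴴ := by
    have hdneg : Matrix.diagonal (fun i => ((-hX.eigenvalues i : ℝ) : ℂ))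
        = -Matrix.diagonal (fun i => ((hX.eigenvalues i : ℝ) : ℂ)) := by
      rw [Matrix.diagonal_neg]
      congr 1
      funext i
      push_cast
      ring
    rw [hdneg, Matrix.mul_neg, Matrix.neg_mul, ← hXU]
  -- reversed eigenvalue list
  set lam' : Fin (p + q) → ℝ := fun i => -lam (Fin.rev i) with hlam'def
  have hlam'_anti : Antitone lam' := by
    intro i j hij
    rw [hlam'def]
    simp only [neg_le_neg_iff]
    exact hlam_anti (Fin.rev_le_rev.mpr hij)
  have he' : ∀ i, lam' i = -hX.eigenvalues ((Fin.revPerm.trans e) i) := by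
    intro i
    rw [hlam'def]
    simp only [Equiv.trans_apply, Fin.revPerm_apply]
    rw [he (Fin.rev i)]
  have upper := sum_quad_le hqn hq' hU hXU hlam_anti e he (W 1)
    (horthW 1 (by norm_num))
  have lower := sum_quad_le hqn hq' hU hXU' hlam'_anti (Fin.revPerm.trans e) he' (W (-1))
    (horthW (-1) (by norm_num))
  have hnegquad : ∀ k, (star (W (-1) k) ⬝ᵥ ((-X) *ᵥ W (-1) k)).re
      = -(star (W (-1) k) ⬝ᵥ (X *ᵥ W (-1) k)).re := by
    intro k
    rw [Matrix.neg_mulVec, dotProduct_neg, Complex.neg_re]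
  rw [Finset.sum_congr rfl fun k (_ : k ∈ Finset.univ) => hnegquad k,
    Finset.sum_neg_distrib] at lower
  -- index bookkeeping
  have htop : ∑ k : Fin q, lam (Fin.castLE hqn k)
      = ∑ k : Fin q, lam ⟨(k : ℕ), by have := k.isLt; omega⟩ :=
    Finset.sum_congr rfl fun k _ => by congr 1
  have hbot : ∑ k : Fin q, lam' (Fin.castLE hqn k)
      = -∑ k : Fin q, lam ⟨p + (k : ℕ), by have := k.isLt; omega⟩ := by
    have step : ∀ k : Fin q, lam' (Fin.castLE hqn k)
        = -(fun j : Fin q => lam ⟨p + (j : ℕ), by have := j.isLt; omega⟩) (Fin.rev k) := by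
      intro k
      rw [hlam'def]
      simp only
      congr 2
      apply Fin.ext
      have hk := k.isLt
      simp only [Fin.val_rev, Fin.coe_castLE]
      omega
    calc ∑ k : Fin q, lam' (Fin.castLE hqn k)
        = ∑ k : Fin q, -(fun j : Fin q =>
            lam ⟨p + (j : ℕ), by have := j.isLt; omega⟩) (Fin.rev k) :=
          Finset.sum_congr rfl fun k _ => step k
      _ = -∑ k : Fin q, (fun j : Fin q =>
            lam ⟨p + (j : ℕ), by have := j.isLt; omega⟩) (Fin.rev k) := by
          rw [Finset.sum_neg_distrib]
      _ = -∑ k : Fin q, lam ⟨p + (k : ℕ), by have := k.isLt; omega⟩ := by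
          congr 1
          exact Fintype.sum_equiv Fin.revPerm _ _ (fun k => rfl)
  have hsum2s : ∑ k : Fin q, 2 * s k
      = ∑ k, (star (W 1 k) ⬝ᵥ (X *ᵥ W 1 k)).re
        - ∑ k, (star (W (-1) k) ⬝ᵥ (X *ᵥ W (-1) k)).re := by
    rw [← Finset.sum_sub_distrib]
    exact Finset.sum_congr rfl fun k _ => (hF3 k).symm
  rw [hsum2s]
  rw [htop] at upper
  rw [hbot] at lower
  linarith [upper, lower]
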